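/- arXiv:1702.01056 — 4 statements merged into one kernel-verified Lean document; each statement's English description precedes it below -/
import Mathlib

section
/- (Proposition 4, part 1.) Let ε ∈ [0, 1], t* ∈ ℝ, let S be a finite nonempty set, and let d : S → ℝ≥0 and t : S → ℝ satisfy (1 − ε)·d(s) ≤ t(s) − t* ≤ (1 + ε)·d(s) for every s ∈ S. If s₀ ∈ S satisfies t(s₀) = min_{s∈S} t(s) (s₀ is a first-infected sensor), then d(s₀) − min_{s∈S} d(s) ≤ ε·(d(s₀) + min_{s∈S} d(s)). -/
theorem stmt_10 {α : Type*} (ε : ℝ) (hε : ε ∈ Set.Icc (0 : ℝ) 1) (tstar : ℝ)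
    (S : Finset α) (hS : S.Nonempty) (d t : α → ℝ)
    (hd : ∀ s ∈ S, 0 ≤ d s)
    (ht : ∀ s ∈ S, (1 - ε) * d s ≤ t s - tstar ∧ t s - tstar ≤ (1 + ε) * d s)
    (s₀ : α) (hs₀ : s₀ ∈ S) (hfirst : t s₀ = S.inf' hS t) :
    d s₀ - S.inf' hS d ≤ ε * (d s₀ + S.inf' hS d) := by
  obtain ⟨s₁, hs₁, hmin⟩ := S.exists_mem_eq_inf' hS d
  rw [hmin]
  have h1 : t s₀ ≤ t s₁ := hfirst ▸ Finset.inf'_le _ hs₁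
  have h2 := (ht s₀ hs₀).1
  have h3 := (ht s₁ hs₁).2
  nlinarith [hd s₀ hs₀, hd s₁ hs₁]
end

section
/- (Theorem 2, complete-observation form.) Let (V, d) be a finite metric space, ε ∈ [0, 1], v* ∈ V, t* ∈ ℝ, and let t : V → ℝ satisfy (1 − ε)·d(v*, u) ≤ t(u) − t* ≤ (1 + ε)·d(v*, u) for every u ∈ V, and t(v) > t(v*) for every v ≠ v*. Then the set of nodes v ∈ V such that |d(u₂, v) − d(u₁, v) − t(u₂) + t(u₁)| ≤ ε·(d(u₁, v) + d(u₂, v)) holds for all u₁, u₂ ∈ V is exactly {v*}. -/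
theorem stmt_15 {V : Type*} [MetricSpace V] [Fintype V]
    (ε : ℝ) (hε : ε ∈ Set.Icc (0 : ℝ) 1) (vstar : V) (tstar : ℝ)
    (t : V → ℝ)
    (ht : ∀ u : V, (1 - ε) * dist vstar u ≤ t u - tstar ∧
      t u - tstar ≤ (1 + ε) * dist vstar u)
    (hfirst : ∀ v : V, v ≠ vstar → t v > t vstar) :
    {v : V | ∀ u₁ u₂ : V,
        |dist u₂ v - dist u₁ v - t u₂ + t u₁| ≤
          ε * (dist u₁ v + dist u₂ v)} = {vstar} := by
  obtain ⟨hε0, hε1⟩ := hε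
  have hts : t vstar = tstar := by
    have h := ht vstar
    simp [dist_self] at h
    linarith [h.1, h.2]
  ext v
  simp only [Set.mem_setOf_eq, Set.mem_singleton_iff]
  constructor
  · intro h
    by_contra hv
    have hΔ : t v - t vstar > 0 := by
      have := hfirst v hv
      linarith
    have key := h v vstar
    rw [dist_self] at key
    have habs := abs_le.mp key
    have hd : dist vstar v ≥ 0 := dist_nonneg
    -- key: |dist vstar v - 0 - t vstar + t v| ≤ ε * (0 + dist vstar v)
    have h1 : dist vstar v - 0 - t vstar + t v ≤ ε * (0 + dist vstar v) := habs.2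
    nlinarith [hd, hΔ, hε1]
  · intro hv
    subst hv
    intro u₁ u₂
    have h1 := ht u₁
    have h2 := ht u₂
    rw [dist_comm u₁ v, dist_comm u₂ v]
    rw [abs_le]
    constructor <;> nlinarith [h1.1, h1.2, h2.1, h2.2, dist_nonneg (x := v) (y := u₁), dist_nonneg (x := v) (y := u₂)]
end

section
/- (Proposition 5, lower bound.) Let (V, d) be a metric space, ε ∈ [0, 1], t* ∈ ℝ, let B ⊆ V be a finite set containing the source v*, let c ∈ V, and let Ω be a finite nonempty set of observations (u_ω, t_ω) ∈ V × ℝ with t_ω − t* ≤ (1 + ε)·d(u_ω, v*) for every ω ∈ Ω. If the infection time t_c of c satisfies t_c − t* ≥ (1 − ε)·d(c, v*), then t_c ≥ min_{v ∈ B} max_{ω ∈ Ω} { d(c, v) − d(u_ω, v) + t_ω − ε·(d(c, v) + d(u_ω, v)) }. -/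
theorem stmt_16 {V : Type*} [MetricSpace V] (ε : ℝ)
    (hε : ε ∈ Set.Icc (0 : ℝ) 1) (tstar : ℝ)
    (B : Finset V) (vstar : V) (hvstar : vstar ∈ B) (c : V)
    (Obs : Finset (V × ℝ)) (hObs : Obs.Nonempty)
    (hub : ∀ ω ∈ Obs, ω.2 - tstar ≤ (1 + ε) * dist ω.1 vstar)
    (tc : ℝ) (htc : tc - tstar ≥ (1 - ε) * dist c vstar) :
    tc ≥ B.inf' ⟨vstar, hvstar⟩ (fun v =>
      Obs.sup' hObs (fun ω =>
        dist c v - dist ω.1 v + ω.2 - ε * (dist c v + dist ω.1 v))) := by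
  refine le_trans (Finset.inf'_le _ hvstar) ?_
  refine Finset.sup'_le _ _ fun ω hω => ?_
  have h := hub ω hω
  nlinarith [h, htc]
end

section
/- (Proposition 5, upper bound.) Let (V, d) be a metric space, ε ∈ [0, 1], t* ∈ ℝ, let B ⊆ V be a finite set containing the source v*, let c ∈ V, and let Ω be a finite nonempty set of observations (u_ω, t_ω) ∈ V × ℝ with t_ω − t* ≥ (1 − ε)·d(u_ω, v*) for every ω ∈ Ω. If the infection time t_c of c satisfies t_c − t* ≤ (1 + ε)·d(c, v*), then t_c ≤ max_{v ∈ B} min_{ω ∈ Ω} { d(c, v) − d(u_ω, v) + t_ω + ε·(d(c, v) + d(u_ω, v)) }. -/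
theorem stmt_17 {V : Type*} [MetricSpace V] (ε : ℝ)
    (hε : ε ∈ Set.Icc (0 : ℝ) 1) (tstar : ℝ)
    (B : Finset V) (vstar : V) (hvstar : vstar ∈ B) (c : V)
    (Obs : Finset (V × ℝ)) (hObs : Obs.Nonempty)
    (hlb : ∀ ω ∈ Obs, ω.2 - tstar ≥ (1 - ε) * dist ω.1 vstar)
    (tc : ℝ) (htc : tc - tstar ≤ (1 + ε) * dist c vstar) :
    tc ≤ B.sup' ⟨vstar, hvstar⟩ (fun v =>
      Obs.inf' hObs (fun ω =>
        dist c v - dist ω.1 v + ω.2 + ε * (dist c v + dist ω.1 v))) := by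
  refine le_trans ?_ (Finset.le_sup' _ hvstar)
  apply Finset.le_inf'
  intro ω hω
  have h := hlb ω hω
  nlinarith [dist_nonneg (x := ω.1) (y := vstar), hε.1]
end
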